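/- arXiv:1308.5955 — 3 statements merged into one kernel-verified Lean document; each statement's English description precedes it below -/
import Mathlib

section
/- Let N ≥ 1, let Ω ⊂ ℝ^N be a nonempty bounded open set, and let C₁ > 0 be a Poincaré constant for Ω, i.e. ∫_Ω |w(x)|² dx ≤ C₁ ∫_Ω |∇w(x)|² dx for every twice continuously differentiable w : ℝ^N → ℂ whose support is a compact subset of Ω. Then for every k ∈ ℝ with 0 ≤ k ≤ 1/(2√C₁) and every twice continuously differentiable w : ℝ^N → ℂ whose support is a compact subset of Ω, one has ∫_Ω |w(x)|² dx ≤ 2 C₁² ∫_Ω |Δw(x) + k² w(x)|² dx. -/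
open MeasureTheory

/-- The Laplacian of a function `u : ℝ^N → ℂ`, defined as the sum of the second
partial derivatives along the standard coordinate directions. -/
noncomputable def laplacian {N : ℕ} (u : EuclideanSpace ℝ (Fin N) → ℂ)
    (x : EuclideanSpace ℝ (Fin N)) : ℂ :=
  ∑ j : Fin N,
    fderiv ℝ (fun y => fderiv ℝ u y (EuclideanSpace.single j 1)) x (EuclideanSpace.single j 1)

/-- The squared norm of the gradient of `u : ℝ^N → ℂ`:
`|∇u(x)|² = ∑_j |∂u/∂x_j(x)|²`. -/
noncomputable def gradNormSq {N : ℕ} (u : EuclideanSpace ℝ (Fin N) → ℂ)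
    (x : EuclideanSpace ℝ (Fin N)) : ℝ :=
  ∑ j : Fin N, ‖fderiv ℝ u x (EuclideanSpace.single j 1)‖ ^ 2

lemma helm_conj_mul_self_re (z : ℂ) : ((starRingEnd ℂ) z * z).re = ‖z‖ ^ 2 := by
  rw [mul_comm, Complex.mul_conj]
  simp [Complex.normSq_eq_norm_sq, ← Complex.ofReal_pow]

lemma helm_neg_re_le (z w : ℂ) : -((starRingEnd ℂ) z * w).re ≤ ‖z‖ * ‖w‖ := by
  have h1 := Complex.abs_re_le_norm ((starRingEnd ℂ) z * w)
  have h2 : ‖(starRingEnd ℂ) z * w‖ = ‖z‖ * ‖w‖ := by rw [norm_mul]; simp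
  rw [h2] at h1
  rcases abs_le.1 h1 with ⟨a, b⟩
  linarith

/-- Quantitative form of Lemma 3.3: if `C₁` is a Poincaré constant for `Ω`, then for
`0 ≤ k ≤ 1/(2√C₁)` and every `C²` function `w` compactly supported in `Ω`,
`∫_Ω |w|² ≤ 2 C₁² ∫_Ω |Δw + k² w|²`. -/
theorem helmholtz_l2_bound_explicit {N : ℕ} (hN : 1 ≤ N)
    (Ω : Set (EuclideanSpace ℝ (Fin N))) (hΩne : Ω.Nonempty)
    (hΩopen : IsOpen Ω) (hΩbdd : Bornology.IsBounded Ω)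
    (C₁ : ℝ) (hC₁ : 0 < C₁)
    (hPoincare : ∀ (w : EuclideanSpace ℝ (Fin N) → ℂ), ContDiff ℝ 2 w →
      HasCompactSupport w → tsupport w ⊆ Ω →
        (∫ x in Ω, ‖w x‖ ^ 2) ≤ C₁ * ∫ x in Ω, gradNormSq w x) :
    ∀ (k : ℝ), 0 ≤ k → k ≤ 1 / (2 * Real.sqrt C₁) →
      ∀ (w : EuclideanSpace ℝ (Fin N) → ℂ), ContDiff ℝ 2 w →
        HasCompactSupport w → tsupport w ⊆ Ω →
          (∫ x in Ω, ‖w x‖ ^ 2)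
            ≤ 2 * C₁ ^ 2 * ∫ x in Ω, ‖laplacian w x + (k : ℂ) ^ 2 * w x‖ ^ 2 := by
  intro k hk0 hkle w hw hcs hsub
  classical
  set e : Fin N → EuclideanSpace ℝ (Fin N) := fun j => EuclideanSpace.single j (1:ℝ) with he
  have hwdiff : Differentiable ℝ w := hw.differentiable two_ne_zero
  have hwcont : Continuous w := hw.continuous
  set wd : Fin N → EuclideanSpace ℝ (Fin N) → ℂ := fun j x => fderiv ℝ w x (e j) with hwd
  set wdd : Fin N → EuclideanSpace ℝ (Fin N) → ℂ := fun j x => fderiv ℝ (wd j) x (e j) with hwdd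
  set f : EuclideanSpace ℝ (Fin N) → ℂ := fun x => laplacian w x + (k : ℂ) ^ 2 * w x with hfdef
  -- regularity
  have hwdC : ∀ j, ContDiff ℝ 1 (wd j) := fun j =>
    (hw.fderiv_right (by norm_num)).clm_apply contDiff_const
  have hwdcont : ∀ j, Continuous (wd j) := fun j => (hwdC j).continuous
  have hwddcont : ∀ j, Continuous (wdd j) := fun j =>
    (((hwdC j).continuous_fderiv one_ne_zero).clm_apply continuous_const)
  have hlapcont : Continuous (laplacian w) := by
    have : Continuous (fun x => ∑ j : Fin N, wdd j x) := continuous_finset_sum _ fun j _ => hwddcont j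
    exact this
  have hfcont : Continuous f := by
    exact hlapcont.add (continuous_const.mul hwcont)
  -- supports
  have hsup_wd : ∀ j, Function.support (wd j) ⊆ tsupport w := by
    intro j x hx
    apply support_fderiv_subset (𝕜 := ℝ)
    intro h
    exact hx (by simp [hwd, h])
  have hts_wd : ∀ j, tsupport (wd j) ⊆ tsupport w := fun j =>
    closure_minimal (hsup_wd j) (isClosed_tsupport w)
  have hsup_wdd : ∀ j, Function.support (wdd j) ⊆ tsupport w := by
    intro j x hx
    refine (hts_wd j) (support_fderiv_subset (𝕜 := ℝ) ?_)
    intro h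
    exact hx (by simp [hwdd, h])
  have hzero : ∀ x ∉ Ω, w x = 0 := fun x hx =>
    image_eq_zero_of_notMem_tsupport (fun h => hx (hsub h))
  have hsup_lap : ∀ x ∉ tsupport w, laplacian w x = 0 := by
    intro x hx
    unfold laplacian
    apply Finset.sum_eq_zero
    intro j _
    by_contra h
    exact hx (hsup_wdd j h)
  have hsup_grad : ∀ x ∉ tsupport w, gradNormSq w x = 0 := by
    intro x hx
    unfold gradNormSq
    apply Finset.sum_eq_zero
    intro j _
    by_contra h
    have : wd j x ≠ 0 := by
      intro h0
      apply h
      simp [hwd, he] at h0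
      simp [h0]
    exact hx (hsup_wd j this)
  -- integrability helper
  have hint : ∀ {E : Type} [inst : NormedAddCommGroup E] (g : EuclideanSpace ℝ (Fin N) → E),
      Continuous g → Function.support g ⊆ tsupport w → Integrable g := by
    intro E inst g hg hs
    exact hg.integrable_of_hasCompactSupport (hcs.mono' hs)
  have int_w2 : Integrable (fun x => ‖w x‖ ^ 2) := by
    refine hint _ (hwcont.norm.pow 2) ?_
    intro x hx
    simp only [Function.mem_support] at hx
    by_contra h
    exact hx (by simp [image_eq_zero_of_notMem_tsupport h])
  have int_f2 : Integrable (fun x => ‖f x‖ ^ 2) := by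
    refine hint _ (hfcont.norm.pow 2) ?_
    intro x hx
    simp only [Function.mem_support] at hx
    by_contra h
    exact hx (by simp [hfdef, hsup_lap x h, image_eq_zero_of_notMem_tsupport h])
  have int_grad : Integrable (gradNormSq w) := by
    refine hint _ ?_ ?_
    · unfold gradNormSq
      exact continuous_finset_sum _ fun j _ => by
        exact (continuous_pow 2).comp ((hwdcont j).norm)
    · intro x hx
      simp only [Function.mem_support] at hx
      by_contra h
      exact hx (hsup_grad x h)
  have int_conj_mul : ∀ (g h : EuclideanSpace ℝ (Fin N) → ℂ), Continuous g → Continuous h →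
      Function.support h ⊆ tsupport w →
      Integrable (fun x => (starRingEnd ℂ) (g x) * h x) := by
    intro g h hg hh hs
    refine hint _ (hg.star.mul hh) ?_
    intro x hx
    simp only [Function.mem_support] at hx
    by_contra hxs
    apply hx
    have : h x = 0 := by
      by_contra h0
      exact hxs (hs h0)
    simp [this]
  -- set integrals to global integrals
  have eqI : (∫ x in Ω, ‖w x‖ ^ 2) = ∫ x, ‖w x‖ ^ 2 :=
    setIntegral_eq_integral_of_forall_compl_eq_zero (fun x hx => by simp [hzero x hx])
  have eqG : (∫ x in Ω, gradNormSq w x) = ∫ x, gradNormSq w x :=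
    setIntegral_eq_integral_of_forall_compl_eq_zero (fun x hx =>
      hsup_grad x (fun h => hx (hsub h)))
  have eqF : (∫ x in Ω, ‖laplacian w x + (k : ℂ) ^ 2 * w x‖ ^ 2) = ∫ x, ‖f x‖ ^ 2 :=
    setIntegral_eq_integral_of_forall_compl_eq_zero (fun x hx => by
      have h : x ∉ tsupport w := fun h => hx (hsub h)
      simp [hsup_lap x h, image_eq_zero_of_notMem_tsupport h])
  -- integration by parts
  have hconjdiff : Differentiable ℝ (fun y => (starRingEnd ℂ) (w y)) := by
    have : (fun y => (starRingEnd ℂ) (w y)) = (fun y => star (w y)) := rfl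
    rw [this]
    exact hwdiff.star
  have hconjfd : ∀ x j, fderiv ℝ (fun y => (starRingEnd ℂ) (w y)) x (e j)
      = (starRingEnd ℂ) (wd j x) := by
    intro x j
    have h : (fun y => (starRingEnd ℂ) (w y)) = (fun y => star (w y)) := rfl
    rw [h, fderiv_star]
    rfl
  have key : ∀ j, (∫ x, (starRingEnd ℂ) (w x) * wdd j x)
      = - ∫ x, (starRingEnd ℂ) (wd j x) * wd j x := by
    intro j
    have h := integral_mul_fderiv_eq_neg_fderiv_mul_of_integrable (μ := volume)
      (f := fun y => (starRingEnd ℂ) (w y)) (g := wd j) (v := e j)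
      ?_ ?_ ?_ (fun x _ => hconjdiff x) (fun x _ => ((hwdC j).differentiable one_ne_zero) x)
    · rw [show (∫ x, (starRingEnd ℂ) (w x) * wdd j x)
          = ∫ x, (starRingEnd ℂ) (w x) * fderiv ℝ (wd j) x (e j) from rfl, h]
      congr 1
      apply integral_congr_ae
      filter_upwards with x
      rw [hconjfd x j]
    · apply Integrable.congr (int_conj_mul _ _ (hwdcont j) (hwdcont j) (hsup_wd j))
      filter_upwards with x
      rw [hconjfd x j]
    · exact int_conj_mul _ _ hwcont (hwddcont j) (hsup_wdd j)
    · exact int_conj_mul _ _ hwcont (hwdcont j) (hsup_wd j)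
  -- grad identity
  have grad_eq : (∫ x, gradNormSq w x) = -(∫ x, (starRingEnd ℂ) (w x) * laplacian w x).re := by
    have h1 : (∫ x, gradNormSq w x) = ∑ j : Fin N, ∫ x, ‖wd j x‖ ^ 2 := by
      rw [← integral_finset_sum]
      · rfl
      · intro j _
        refine hint _ ((hwdcont j).norm.pow 2) ?_
        intro x hx
        simp only [Function.mem_support] at hx
        by_contra h
        refine hx ?_
        have : wd j x = 0 := by
          by_contra h0; exact h (hsup_wd j h0)
        simp [this]
    have h2 : ∀ j : Fin N, (∫ x, ‖wd j x‖ ^ 2)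
        = (∫ x, (starRingEnd ℂ) (wd j x) * wd j x).re := by
      intro j
      rw [← RCLike.re_eq_complex_re,
        ← integral_re (int_conj_mul _ _ (hwdcont j) (hwdcont j) (hsup_wd j))]
      apply integral_congr_ae
      filter_upwards with x
      rw [RCLike.re_eq_complex_re, helm_conj_mul_self_re]
    have h3 : (∫ x, (starRingEnd ℂ) (w x) * laplacian w x)
        = ∑ j : Fin N, ∫ x, (starRingEnd ℂ) (w x) * wdd j x := by
      rw [← integral_finset_sum]
      · apply integral_congr_ae
        filter_upwards with x
        unfold laplacian
        rw [Finset.mul_sum]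
      · intro j _
        exact int_conj_mul _ _ hwcont (hwddcont j) (hsup_wdd j)
    rw [h1, h3]
    rw [Complex.re_sum]
    rw [← Finset.sum_neg_distrib]
    apply Finset.sum_congr rfl
    intro j _
    rw [h2 j, key j]
    simp
  -- split laplacian
  have lap_split : (∫ x, (starRingEnd ℂ) (w x) * laplacian w x)
      = (∫ x, (starRingEnd ℂ) (w x) * f x) - (k:ℂ)^2 * ∫ x, (starRingEnd ℂ) (w x) * w x := by
    have : ∀ x, (starRingEnd ℂ) (w x) * laplacian w x
        = (starRingEnd ℂ) (w x) * f x - (k:ℂ)^2 * ((starRingEnd ℂ) (w x) * w x) := by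
      intro x
      simp only [hfdef]
      ring
    rw [integral_congr_ae (Filter.Eventually.of_forall this)]
    rw [integral_sub (int_conj_mul _ _ hwcont hfcont ?_) ?_]
    · rw [integral_const_mul]
    · intro x hx
      simp only [Function.mem_support, hfdef] at hx
      by_contra h
      exact hx (by simp [hsup_lap x h, image_eq_zero_of_notMem_tsupport h])
    · apply Integrable.const_mul
      exact int_conj_mul _ _ hwcont hwcont (subset_tsupport w)
  have hsup_f : Function.support f ⊆ tsupport w := by
    intro x hx
    simp only [Function.mem_support] at hx
    by_contra h
    exact hx (by simp [hfdef, hsup_lap x h, image_eq_zero_of_notMem_tsupport h])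
  have int_conjwf := int_conj_mul _ _ hwcont hfcont hsup_f
  have I_eq : (∫ x, (starRingEnd ℂ) (w x) * w x).re = ∫ x, ‖w x‖ ^ 2 := by
    rw [← RCLike.re_eq_complex_re,
      ← integral_re (int_conj_mul _ _ hwcont hwcont (subset_tsupport w))]
    apply integral_congr_ae
    filter_upwards with x
    rw [RCLike.re_eq_complex_re, helm_conj_mul_self_re]
  have hre_split : (∫ x, gradNormSq w x)
      = k ^ 2 * (∫ x, ‖w x‖ ^ 2) + ∫ x, -((starRingEnd ℂ) (w x) * f x).re := by
    rw [grad_eq, lap_split]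
    have h4 : (((k:ℂ)^2) * ∫ x, (starRingEnd ℂ) (w x) * w x).re
        = k ^ 2 * (∫ x, (starRingEnd ℂ) (w x) * w x).re := by
      rw [show ((k:ℂ)^2) = (((k^2 : ℝ)) : ℂ) by push_cast; ring, Complex.re_ofReal_mul]
    have h5 : (∫ x, -((starRingEnd ℂ) (w x) * f x).re)
        = -(∫ x, (starRingEnd ℂ) (w x) * f x).re := by
      rw [integral_neg]
      congr 1
      rw [← RCLike.re_eq_complex_re, ← integral_re int_conjwf]
    rw [Complex.sub_re, h4, h5, I_eq]
    ring
  have ptbound : ∀ x, -((starRingEnd ℂ) (w x) * f x).re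
      ≤ ‖w x‖ ^ 2 / (4*C₁) + C₁ * ‖f x‖ ^ 2 := by
    intro x
    have h1 := helm_neg_re_le (w x) (f x)
    have h2 : ‖w x‖ * ‖f x‖ ≤ ‖w x‖ ^ 2 / (4*C₁) + C₁ * ‖f x‖ ^ 2 := by
      rw [div_add' _ _ _ (by positivity), le_div_iff₀ (by positivity)]
      nlinarith [sq_nonneg (‖w x‖ - 2*C₁*‖f x‖)]
    linarith
  have int_negre : Integrable (fun x => -((starRingEnd ℂ) (w x) * f x).re) := by
    have : Integrable (fun x => ((starRingEnd ℂ) (w x) * f x).re) := by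
      have hc : Continuous (fun x => ((starRingEnd ℂ) (w x) * f x).re) :=
        Complex.continuous_re.comp ((hwcont.star.mul hfcont))
      refine hint _ hc ?_
      intro x hx
      simp only [Function.mem_support] at hx
      by_contra h
      exact hx (by simp [image_eq_zero_of_notMem_tsupport h])
    exact this.neg
  have int_rhs : Integrable (fun x => ‖w x‖ ^ 2 / (4*C₁) + C₁ * ‖f x‖ ^ 2) :=
    (int_w2.div_const _).add (int_f2.const_mul _)
  have hGb : (∫ x, gradNormSq w x)
      ≤ k ^ 2 * (∫ x, ‖w x‖ ^ 2) + ((∫ x, ‖w x‖ ^ 2) / (4*C₁) + C₁ * ∫ x, ‖f x‖ ^ 2) := by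
    rw [hre_split]
    have hmono := integral_mono int_negre int_rhs ptbound
    have hsum : (∫ x, (‖w x‖ ^ 2 / (4*C₁) + C₁ * ‖f x‖ ^ 2))
        = (∫ x, ‖w x‖ ^ 2) / (4*C₁) + C₁ * ∫ x, ‖f x‖ ^ 2 := by
      rw [integral_add (int_w2.div_const _) (int_f2.const_mul _), integral_div,
        integral_const_mul]
    linarith
  have hP := hPoincare w hw hcs hsub
  rw [eqI, eqG] at hP
  rw [eqI, eqF]
  have hk2 : k ^ 2 ≤ 1 / (4*C₁) := by
    have h := pow_le_pow_left₀ hk0 hkle 2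
    have hs : (1 / (2 * Real.sqrt C₁)) ^ 2 = 1 / (4*C₁) := by
      rw [div_pow, mul_pow, Real.sq_sqrt hC₁.le]
      norm_num
    rw [hs] at h
    exact h
  have hk2' : C₁ * k ^ 2 ≤ 1/4 := by
    have h := mul_le_mul_of_nonneg_left hk2 hC₁.le
    have : C₁ * (1 / (4*C₁)) = 1/4 := by field_simp
    linarith
  have hI0 : (0:ℝ) ≤ ∫ x, ‖w x‖ ^ 2 := integral_nonneg (fun x => sq_nonneg _)
  have hF0 : (0:ℝ) ≤ ∫ x, ‖f x‖ ^ 2 := integral_nonneg (fun x => sq_nonneg _)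
  set I := ∫ x, ‖w x‖ ^ 2 with hI
  set F := ∫ x, ‖f x‖ ^ 2 with hF
  have hdiv : C₁ * (I / (4*C₁)) = I / 4 := by field_simp
  have step : I ≤ C₁ * (k ^ 2 * I + (I / (4*C₁) + C₁ * F)) :=
    le_trans hP (mul_le_mul_of_nonneg_left hGb hC₁.le)
  have step2 : C₁ * (k ^ 2 * I + (I / (4*C₁) + C₁ * F))
      = (C₁ * k ^ 2) * I + I / 4 + C₁ ^ 2 * F := by
    rw [mul_add, mul_add, hdiv]
    ring
  have step3 : (C₁ * k ^ 2) * I ≤ (1/4) * I :=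
    mul_le_mul_of_nonneg_right hk2' hI0
  linarith
end

section
/- Let N ≥ 1, let Ω ⊂ ℝ^N be a nonempty bounded open set, let k ∈ ℝ, and let n, ñ ∈ ℂ. Let w : ℝ^N → ℂ be twice continuously differentiable with support a compact subset of Ω, and let v : ℝ^N → ℂ be twice continuously differentiable, such that Δv(x) + k² ñ² v(x) = 0 for all x ∈ Ω and Δw(x) + k² n² w(x) = v(x) for all x ∈ Ω. Then ∫_Ω |v(x)|² dx = k² (n² − conj(ñ)²) ∫_Ω conj(v(x)) · w(x) dx. -/
open MeasureTheory

section Aux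

variable {N : ℕ}

lemma deriv1_contDiff {u : EuclideanSpace ℝ (Fin N) → ℂ} (hu : ContDiff ℝ 2 u)
    (e : EuclideanSpace ℝ (Fin N)) : ContDiff ℝ 1 (fun y => fderiv ℝ u y e) :=
  (hu.fderiv_right (by norm_num)).clm_apply contDiff_const

lemma hcs_apply {u : EuclideanSpace ℝ (Fin N) → ℂ} (hu : HasCompactSupport u)
    (e : EuclideanSpace ℝ (Fin N)) : HasCompactSupport (fun y => fderiv ℝ u y e) :=
  (hu.fderiv (𝕜 := ℝ)).comp_left (g := fun L : (EuclideanSpace ℝ (Fin N)) →L[ℝ] ℂ => L e) rfl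

lemma support_deriv1 {u : EuclideanSpace ℝ (Fin N) → ℂ} (e : EuclideanSpace ℝ (Fin N)) :
    Function.support (fun y => fderiv ℝ u y e) ⊆ tsupport u := by
  intro x hx
  have : fderiv ℝ u x ≠ 0 := by
    intro h
    apply hx
    simp only [Function.mem_support] at hx ⊢
    exact absurd (by simp [h]) hx
  exact support_fderiv_subset ℝ this

lemma support_deriv2 {u : EuclideanSpace ℝ (Fin N) → ℂ} (e : EuclideanSpace ℝ (Fin N)) :
    Function.support (fun y => fderiv ℝ (fun z => fderiv ℝ u z e) y e) ⊆ tsupport u := by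
  refine (support_deriv1 e).trans (closure_minimal ?_ (isClosed_tsupport u))
  exact support_deriv1 e

lemma laplacian_eq_zero_of_not_mem {u : EuclideanSpace ℝ (Fin N) → ℂ}
    {x : EuclideanSpace ℝ (Fin N)} (hx : x ∉ tsupport u) : laplacian u x = 0 := by
  unfold laplacian
  refine Finset.sum_eq_zero fun j _ => ?_
  by_contra h
  exact hx (support_deriv2 (EuclideanSpace.single j 1) h)

lemma support_laplacian {u : EuclideanSpace ℝ (Fin N) → ℂ} :
    Function.support (laplacian u) ⊆ tsupport u := fun x hx => by
  by_contra h
  exact hx (laplacian_eq_zero_of_not_mem h)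

lemma cont_deriv_apply {u : EuclideanSpace ℝ (Fin N) → ℂ} (hu : ContDiff ℝ 1 u)
    (e : EuclideanSpace ℝ (Fin N)) : Continuous (fun x => fderiv ℝ u x e) :=
  ((hu.fderiv_right (m := 0) le_rfl).clm_apply contDiff_const).continuous

lemma continuous_deriv2 {u : EuclideanSpace ℝ (Fin N) → ℂ} (hu : ContDiff ℝ 2 u)
    (e : EuclideanSpace ℝ (Fin N)) :
    Continuous (fun y => fderiv ℝ (fun z => fderiv ℝ u z e) y e) :=
  cont_deriv_apply (deriv1_contDiff hu e) e

lemma continuous_laplacian {u : EuclideanSpace ℝ (Fin N) → ℂ} (hu : ContDiff ℝ 2 u) :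
    Continuous (laplacian u) := by
  unfold laplacian
  exact continuous_finset_sum _ fun j _ => continuous_deriv2 hu _

/-- One integration by parts. -/
lemma int_parts {f g : EuclideanSpace ℝ (Fin N) → ℂ} (hf : ContDiff ℝ 1 f)
    (hg : ContDiff ℝ 1 g) (hgs : HasCompactSupport g) (e : EuclideanSpace ℝ (Fin N)) :
    ∫ x, f x * fderiv ℝ g x e = - ∫ x, fderiv ℝ f x e * g x := by
  have hg' : Continuous (fun x => fderiv ℝ g x e) := cont_deriv_apply hg e
  have hf' : Continuous (fun x => fderiv ℝ f x e) := cont_deriv_apply hf e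
  have h1 : Integrable (fun x => fderiv ℝ f x e * g x) :=
    ((hf'.mul hg.continuous)).integrable_of_hasCompactSupport (hgs.mul_left)
  have h2 : Integrable (fun x => f x * fderiv ℝ g x e) :=
    ((hf.continuous.mul hg')).integrable_of_hasCompactSupport ((hcs_apply hgs e).mul_left)
  have h3 : Integrable (fun x => f x * g x) :=
    ((hf.continuous.mul hg.continuous)).integrable_of_hasCompactSupport (hgs.mul_left)
  exact integral_mul_fderiv_eq_neg_fderiv_mul_of_integrable h1 h2 h3
    (fun x _ => hf.differentiable one_ne_zero x) (fun x _ => hg.differentiable one_ne_zero x)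

/-- Two integrations by parts. -/
lemma int_parts2 {f g : EuclideanSpace ℝ (Fin N) → ℂ} (hf : ContDiff ℝ 2 f)
    (hg : ContDiff ℝ 2 g) (hgs : HasCompactSupport g) (e : EuclideanSpace ℝ (Fin N)) :
    ∫ x, f x * fderiv ℝ (fun y => fderiv ℝ g y e) x e
      = ∫ x, fderiv ℝ (fun y => fderiv ℝ f y e) x e * g x := by
  have h1 : ∫ x, f x * fderiv ℝ (fun y => fderiv ℝ g y e) x e
      = - ∫ x, fderiv ℝ f x e * (fun y => fderiv ℝ g y e) x :=
    int_parts (hf.of_le (by norm_num)) (deriv1_contDiff hg e) (hcs_apply hgs e) e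
  have h2 : ∫ x, (fun y => fderiv ℝ f y e) x * fderiv ℝ g x e
      = - ∫ x, fderiv ℝ (fun y => fderiv ℝ f y e) x e * g x :=
    int_parts (deriv1_contDiff hf e) (hg.of_le (by norm_num)) hgs e
  simp only at h1 h2
  rw [h1, h2, neg_neg]

/-- Moving the Laplacian across the integral. -/
lemma int_mul_laplacian {f g : EuclideanSpace ℝ (Fin N) → ℂ} (hf : ContDiff ℝ 2 f)
    (hg : ContDiff ℝ 2 g) (hgs : HasCompactSupport g) :
    ∫ x, f x * laplacian g x = ∫ x, laplacian f x * g x := by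
  have key : ∀ j : Fin N, ∫ x, f x * fderiv ℝ (fun y => fderiv ℝ g y (EuclideanSpace.single j 1)) x
      (EuclideanSpace.single j 1)
      = ∫ x, fderiv ℝ (fun y => fderiv ℝ f y (EuclideanSpace.single j 1)) x
        (EuclideanSpace.single j 1) * g x := fun j => int_parts2 hf hg hgs _
  have hL : ∀ j : Fin N, Integrable (fun x => f x * fderiv ℝ
      (fun y => fderiv ℝ g y (EuclideanSpace.single j 1)) x (EuclideanSpace.single j 1)) := by
    intro j
    refine (hf.continuous.mul (continuous_deriv2 hg _)).integrable_of_hasCompactSupport ?_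
    refine HasCompactSupport.mul_left ?_
    exact (hcs_apply (hcs_apply hgs _) _)
  have hR : ∀ j : Fin N, Integrable (fun x => fderiv ℝ
      (fun y => fderiv ℝ f y (EuclideanSpace.single j 1)) x (EuclideanSpace.single j 1) * g x) := by
    intro j
    exact ((continuous_deriv2 hf _).mul hg.continuous).integrable_of_hasCompactSupport
      hgs.mul_left
  calc ∫ x, f x * laplacian g x
      = ∫ x, ∑ j : Fin N, f x * fderiv ℝ
          (fun y => fderiv ℝ g y (EuclideanSpace.single j 1)) x (EuclideanSpace.single j 1) := by
        unfold laplacian; simp_rw [Finset.mul_sum]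
    _ = ∑ j : Fin N, ∫ x, f x * fderiv ℝ
          (fun y => fderiv ℝ g y (EuclideanSpace.single j 1)) x (EuclideanSpace.single j 1) :=
        integral_finset_sum _ (fun j _ => hL j)
    _ = ∑ j : Fin N, ∫ x, fderiv ℝ
          (fun y => fderiv ℝ f y (EuclideanSpace.single j 1)) x (EuclideanSpace.single j 1)
          * g x := by simp_rw [key]
    _ = ∫ x, ∑ j : Fin N, fderiv ℝ
          (fun y => fderiv ℝ f y (EuclideanSpace.single j 1)) x (EuclideanSpace.single j 1)
          * g x := (integral_finset_sum _ (fun j _ => hR j)).symm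
    _ = ∫ x, laplacian f x * g x := by unfold laplacian; simp_rw [Finset.sum_mul]

lemma conj_contDiff {u : EuclideanSpace ℝ (Fin N) → ℂ} (hu : ContDiff ℝ 2 u) :
    ContDiff ℝ 2 (fun x => (starRingEnd ℂ) (u x)) :=
  Complex.conjCLE.toContinuousLinearMap.contDiff.comp hu

lemma fderiv_conj {u : EuclideanSpace ℝ (Fin N) → ℂ} (hu : Differentiable ℝ u)
    (x e : EuclideanSpace ℝ (Fin N)) :
    fderiv ℝ (fun y => (starRingEnd ℂ) (u y)) x e = (starRingEnd ℂ) (fderiv ℝ u x e) := by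
  have : fderiv ℝ (fun y => (starRingEnd ℂ) (u y)) x
      = (Complex.conjCLE.toContinuousLinearMap).comp (fderiv ℝ u x) :=
    (Complex.conjCLE.toContinuousLinearMap.hasFDerivAt.comp x (hu x).hasFDerivAt).fderiv
  rw [this]; rfl

lemma laplacian_conj {u : EuclideanSpace ℝ (Fin N) → ℂ} (hu : ContDiff ℝ 2 u)
    (x : EuclideanSpace ℝ (Fin N)) :
    laplacian (fun y => (starRingEnd ℂ) (u y)) x = (starRingEnd ℂ) (laplacian u x) := by
  unfold laplacian
  rw [map_sum]
  refine Finset.sum_congr rfl fun j _ => ?_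
  set e := EuclideanSpace.single j (1:ℝ)
  have h1 : (fun y => fderiv ℝ (fun z => (starRingEnd ℂ) (u z)) y e)
      = fun y => (starRingEnd ℂ) (fderiv ℝ u y e) :=
    funext fun y => fderiv_conj (hu.differentiable (by norm_num)) y e
  rw [h1]
  exact fderiv_conj ((deriv1_contDiff hu e).differentiable one_ne_zero) x e

end Aux

/-- The transmission integral identity (3.5)–(3.8): if `Δv + k² ntilde² v = 0` on `Ω` and
`Δw + k² n² w = v` on `Ω`, with `w` of class `C²` compactly supported in `Ω` and `v`
of class `C²`, then `∫_Ω |v|² = k² (n² − conj(ntilde)²) ∫_Ω conj(v) · w`. -/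
theorem transmission_integral_identity {N : ℕ} (hN : 1 ≤ N)
    (Ω : Set (EuclideanSpace ℝ (Fin N))) (hΩne : Ω.Nonempty)
    (hΩopen : IsOpen Ω) (hΩbdd : Bornology.IsBounded Ω)
    (k : ℝ) (n ntilde : ℂ)
    (w v : EuclideanSpace ℝ (Fin N) → ℂ)
    (hw : ContDiff ℝ 2 w) (hwsupp : HasCompactSupport w) (hwΩ : tsupport w ⊆ Ω)
    (hv : ContDiff ℝ 2 v)
    (hveq : ∀ x ∈ Ω, laplacian v x + (k : ℂ) ^ 2 * ntilde ^ 2 * v x = 0)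
    (hweq : ∀ x ∈ Ω, laplacian w x + (k : ℂ) ^ 2 * n ^ 2 * w x = v x) :
    ((∫ x in Ω, ‖v x‖ ^ 2 : ℝ) : ℂ)
      = (k : ℂ) ^ 2 * (n ^ 2 - (starRingEnd ℂ ntilde) ^ 2)
        * ∫ x in Ω, (starRingEnd ℂ) (v x) * w x := by
  set f : EuclideanSpace ℝ (Fin N) → ℂ := fun x => (starRingEnd ℂ) (v x) with hf_def
  have hfc2 : ContDiff ℝ 2 f := conj_contDiff hv
  have hw0 : ∀ x ∉ Ω, w x = 0 := fun x hx =>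
    image_eq_zero_of_notMem_tsupport (fun h => hx (hwΩ h))
  have hlapw_cs : HasCompactSupport (laplacian w) :=
    hwsupp.mono' support_laplacian
  -- integrability
  have hA : Integrable (fun x => f x * laplacian w x) :=
    ((Complex.continuous_conj.comp hv.continuous).mul
      (continuous_laplacian hw)).integrable_of_hasCompactSupport hlapw_cs.mul_left
  have hB : Integrable (fun x => f x * w x) :=
    ((Complex.continuous_conj.comp hv.continuous).mul
      hw.continuous).integrable_of_hasCompactSupport hwsupp.mul_left
  -- step 1: rewrite the LHS
  have step1 : ((∫ x in Ω, ‖v x‖ ^ 2 : ℝ) : ℂ) = ∫ x in Ω, f x * v x := by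
    have h1 : ∫ x in Ω, f x * v x = ∫ x in Ω, ((‖v x‖ ^ 2 : ℝ) : ℂ) := by
      refine integral_congr_ae (Filter.Eventually.of_forall fun x => ?_)
      simp only [hf_def]
      rw [mul_comm, Complex.mul_conj', Complex.ofReal_pow]
    rw [h1]
    exact (integral_ofReal (𝕜 := ℂ)).symm
  -- step 2: substitute the equation for w
  have step2 : ∫ x in Ω, f x * v x
      = ∫ x in Ω, (f x * laplacian w x + (k : ℂ) ^ 2 * n ^ 2 * (f x * w x)) := by
    refine setIntegral_congr_fun hΩopen.measurableSet fun x hx => ?_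
    rw [← hweq x hx]; ring
  -- step 3: split the integral
  have step3 : ∫ x in Ω, (f x * laplacian w x + (k : ℂ) ^ 2 * n ^ 2 * (f x * w x))
      = (∫ x in Ω, f x * laplacian w x) + (k : ℂ) ^ 2 * n ^ 2 * ∫ x in Ω, f x * w x := by
    rw [integral_add hA.integrableOn ((hB.const_mul _).integrableOn), integral_const_mul]
  -- step 4: extend to all of space
  have step4A : ∫ x in Ω, f x * laplacian w x = ∫ x, f x * laplacian w x :=
    setIntegral_eq_integral_of_forall_compl_eq_zero fun x hx => by
      have : laplacian w x = 0 := laplacian_eq_zero_of_not_mem fun h => hx (hwΩ h)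
      rw [this, mul_zero]
  have step4B : ∫ x in Ω, f x * w x = ∫ x, f x * w x :=
    setIntegral_eq_integral_of_forall_compl_eq_zero fun x hx => by
      rw [hw0 x hx, mul_zero]
  -- step 5: integrate by parts twice
  have step5 : ∫ x, f x * laplacian w x = ∫ x, laplacian f x * w x :=
    int_mul_laplacian hfc2 hw hwsupp
  -- step 6: use the equation for v
  have step6 : ∀ x, laplacian f x * w x
      = (-((k : ℂ) ^ 2 * (starRingEnd ℂ ntilde) ^ 2)) * (f x * w x) := by
    intro x
    by_cases hx : x ∈ Ω
    · have hv' : laplacian v x = -((k : ℂ) ^ 2 * ntilde ^ 2 * v x) := by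
        have h := hveq x hx
        linear_combination h
      have : laplacian f x = (starRingEnd ℂ) (laplacian v x) := laplacian_conj hv x
      rw [this, hv', map_neg, map_mul, map_mul, map_pow, map_pow, Complex.conj_ofReal]
      simp only [hf_def]; ring
    · rw [hw0 x hx, mul_zero, mul_zero, mul_zero]
  have step6' : ∫ x, laplacian f x * w x
      = (-((k : ℂ) ^ 2 * (starRingEnd ℂ ntilde) ^ 2)) * ∫ x, f x * w x := by
    rw [← integral_const_mul]
    exact integral_congr_ae (Filter.Eventually.of_forall step6)
  rw [step1, step2, step3, step4A, step5, step6', ← step4B]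
  ring
end

section
/- Let N ≥ 1, let Ω ⊂ ℝ^N be a nonempty bounded open set, let k ∈ ℝ, and let n* > 0 and n, ñ ∈ ℂ with |n| ≤ n* and |ñ| ≤ n*. Let w : ℝ^N → ℂ be twice continuously differentiable with support a compact subset of Ω, and let v : ℝ^N → ℂ be twice continuously differentiable, such that Δv(x) + k² ñ² v(x) = 0 for all x ∈ Ω and Δw(x) + k² n² w(x) = v(x) for all x ∈ Ω. Then ∫_Ω |v(x)|² dx ≤ 2 k² (n*)² (∫_Ω |v(x)|² dx)^{1/2} (∫_Ω |w(x)|² dx)^{1/2}. -/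
open MeasureTheory

open Metric

section aux

variable {E : Type*} [NormedAddCommGroup E] [InnerProductSpace ℝ E]

lemma my_fderiv_comp_clm {F : Type*} [NormedAddCommGroup F] [NormedSpace ℝ F]
    (c : ℂ →L[ℝ] F) {g : E → ℂ} {x : E} (hg : DifferentiableAt ℝ g x)
    (e : E) : fderiv ℝ (fun y => c (g y)) x e = c (fderiv ℝ g x e) := by
  rw [show (fun y => c (g y)) = c ∘ g from rfl,
    (c.hasFDerivAt.comp x hg.hasFDerivAt).fderiv]
  rfl

variable [FiniteDimensional ℝ E] [MeasurableSpace E] [BorelSpace E]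
  (μ : Measure E) [μ.IsAddHaarMeasure]

lemma my_integral_fderiv_zero_real {f : E → ℝ} (hf : ContDiff ℝ 1 f)
    (h'f : HasCompactSupport f) (v : E) : ∫ x, fderiv ℝ f x v ∂μ = 0 := by
  obtain ⟨r, hr, hsub⟩ : ∃ r, 0 < r ∧ tsupport f ⊆ ball 0 r := by
    obtain ⟨r, hr⟩ := h'f.isBounded.subset_ball 0
    exact ⟨max r 1, lt_of_lt_of_le one_pos (le_max_right _ _),
      hr.trans (ball_subset_ball (le_max_left _ _))⟩
  set χb : ContDiffBump (0 : E) := ⟨r, r + 1, hr, by linarith⟩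
  set χ : E → ℝ := fun x => χb x with hχdef
  have hχc : ContDiff ℝ 1 χ := χb.contDiff
  have hχsupp : HasCompactSupport χ := χb.hasCompactSupport
  obtain ⟨C, hC⟩ := ContDiff.lipschitzWith_of_hasCompactSupport h'f hf one_ne_zero
  obtain ⟨D, hD⟩ := ContDiff.lipschitzWith_of_hasCompactSupport hχsupp hχc one_ne_zero
  have key := hC.integral_lineDeriv_mul_eq hD hχsupp (μ := μ) v
  have h1 : ∀ x, lineDeriv ℝ f x v * χ x = fderiv ℝ f x v := by
    intro x
    by_cases hx : x ∈ ball (0 : E) r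
    · have hone : χ x = 1 := χb.one_of_mem_closedBall (ball_subset_closedBall hx)
      rw [(hf.differentiable one_ne_zero x).lineDeriv_eq_fderiv, hone, mul_one]
    · have hx' : x ∉ tsupport f := fun h => hx (hsub h)
      have h0 : fderiv ℝ f x = 0 := by
        by_contra h
        exact hx' (support_fderiv_subset (𝕜 := ℝ) (Function.mem_support.2 h))
      have h0' : lineDeriv ℝ f x v = 0 := by
        rw [(hf.differentiable one_ne_zero x).lineDeriv_eq_fderiv, h0]; rfl
      rw [h0', h0]; simp
  have h2 : ∀ x, lineDeriv ℝ χ x (-v) * f x = 0 := by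
    intro x
    by_cases hx : x ∈ tsupport f
    · have hx' : x ∈ ball (0 : E) r := hsub hx
      have : χ =ᶠ[nhds x] (fun _ => 1) := by
        filter_upwards [isOpen_ball.mem_nhds hx'] with y hy
        exact χb.one_of_mem_closedBall (ball_subset_closedBall hy)
      have h0 : lineDeriv ℝ χ x (-v) = 0 := by
        rw [((hχc.differentiable one_ne_zero) x).lineDeriv_eq_fderiv, this.fderiv_eq]
        simp [fderiv_const]
      rw [h0, zero_mul]
    · have : f x = 0 := image_eq_zero_of_notMem_tsupport hx
      rw [this, mul_zero]
  simp only [h1] at key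
  simp only [h2] at key
  rw [key, integral_zero]

lemma my_integral_fderiv_zero_complex {f : E → ℂ} (hf : ContDiff ℝ 1 f)
    (h'f : HasCompactSupport f) (v : E) : ∫ x, fderiv ℝ f x v ∂μ = 0 := by
  have hd : Differentiable ℝ f := hf.differentiable one_ne_zero
  have hgc : Continuous fun x => fderiv ℝ f x v :=
    (hf.continuous_fderiv one_ne_zero).clm_apply continuous_const
  have hint : Integrable (fun x => fderiv ℝ f x v) μ :=
    hgc.integrable_of_hasCompactSupport (h'f.fderiv_apply (𝕜 := ℝ) v)
  have hre : ∀ {F : Type} [NormedAddCommGroup F] [NormedSpace ℝ F] (c : ℂ →L[ℝ] F),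
      (ContDiff ℝ 1 fun y => c (f y)) := fun c => c.contDiff.comp hf
  apply Complex.ext
  · rw [show (∫ x, fderiv ℝ f x v ∂μ).re = ∫ x, (fderiv ℝ f x v).re ∂μ from
      (integral_re hint).symm, Complex.zero_re]
    have : ∀ x, (fderiv ℝ f x v).re = fderiv ℝ (fun y => Complex.reCLM (f y)) x v := by
      intro x; rw [my_fderiv_comp_clm Complex.reCLM (hd x) v]; rfl
    simp_rw [this]
    exact my_integral_fderiv_zero_real μ (hre Complex.reCLM) (h'f.comp_left rfl) v
  · rw [show (∫ x, fderiv ℝ f x v ∂μ).im = ∫ x, (fderiv ℝ f x v).im ∂μ from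
      (integral_im hint).symm, Complex.zero_im]
    have : ∀ x, (fderiv ℝ f x v).im = fderiv ℝ (fun y => Complex.imCLM (f y)) x v := by
      intro x; rw [my_fderiv_comp_clm Complex.imCLM (hd x) v]; rfl
    simp_rw [this]
    exact my_integral_fderiv_zero_real μ (hre Complex.imCLM) (h'f.comp_left rfl) v

lemma my_green_dir {f u : E → ℂ} (hf : ContDiff ℝ 2 f) (hfs : HasCompactSupport f)
    (hu : ContDiff ℝ 2 u) (e : E) :
    ∫ x, fderiv ℝ (fun y => fderiv ℝ f y e) x e * u x ∂μ
      = ∫ x, f x * fderiv ℝ (fun y => fderiv ℝ u y e) x e ∂μ := by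
  have hfd : Differentiable ℝ f := hf.differentiable two_ne_zero
  have hud : Differentiable ℝ u := hu.differentiable two_ne_zero
  have hDf : ContDiff ℝ 1 (fun x => fderiv ℝ f x e) :=
    (hf.fderiv_right (m := 1) le_rfl).clm_apply contDiff_const
  have hDu : ContDiff ℝ 1 (fun x => fderiv ℝ u x e) :=
    (hu.fderiv_right (m := 1) le_rfl).clm_apply contDiff_const
  set g : E → ℂ := fun x => fderiv ℝ f x e * u x - f x * fderiv ℝ u x e with hgdef
  have hg : ContDiff ℝ 1 g :=
    (hDf.mul (hu.of_le one_le_two)).sub ((hf.of_le one_le_two).mul hDu)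
  have hgs : HasCompactSupport g := by
    apply hfs.mono'
    intro x hx
    by_contra hmem
    have hf0 : f x = 0 := image_eq_zero_of_notMem_tsupport hmem
    have hDf0 : fderiv ℝ f x = 0 := fderiv_of_notMem_tsupport (𝕜 := ℝ) hmem
    apply hx
    simp [hgdef, hf0, hDf0]
  have key := my_integral_fderiv_zero_complex μ hg hgs e
  have hder : ∀ x, fderiv ℝ g x e =
      fderiv ℝ (fun y => fderiv ℝ f y e) x e * u x
        - f x * fderiv ℝ (fun y => fderiv ℝ u y e) x e := by
    intro x
    have h1 : fderiv ℝ (fun y => fderiv ℝ f y e * u y) x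
        = fderiv ℝ f x e • fderiv ℝ u x + u x • fderiv ℝ (fun y => fderiv ℝ f y e) x :=
      fderiv_mul ((hDf.differentiable one_ne_zero) x) (hud x)
    have h2 : fderiv ℝ (fun y => f y * fderiv ℝ u y e) x
        = f x • fderiv ℝ (fun y => fderiv ℝ u y e) x + fderiv ℝ u x e • fderiv ℝ f x :=
      fderiv_mul (hfd x) ((hDu.differentiable one_ne_zero) x)
    have h3 : fderiv ℝ g x = fderiv ℝ (fun y => fderiv ℝ f y e * u y) x
        - fderiv ℝ (fun y => f y * fderiv ℝ u y e) x := by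
      rw [hgdef]
      exact fderiv_sub ((hDf.differentiable one_ne_zero x).mul (hud x))
        ((hfd x).mul (hDu.differentiable one_ne_zero x))
    rw [h3, h1, h2]
    simp only [ContinuousLinearMap.sub_apply, ContinuousLinearMap.add_apply,
      ContinuousLinearMap.smul_apply, smul_eq_mul]
    ring
  simp_rw [hder] at key
  have hi1 : Integrable (fun x => fderiv ℝ (fun y => fderiv ℝ f y e) x e * u x) μ := by
    apply Continuous.integrable_of_hasCompactSupport
    · exact ((hDf.continuous_fderiv one_ne_zero).clm_apply continuous_const).mul hu.continuous
    · exact ((hfs.fderiv_apply (𝕜 := ℝ) e).fderiv_apply (𝕜 := ℝ) e).mul_right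
  have hi2 : Integrable (fun x => f x * fderiv ℝ (fun y => fderiv ℝ u y e) x e) μ := by
    apply Continuous.integrable_of_hasCompactSupport
    · exact hf.continuous.mul ((hDu.continuous_fderiv one_ne_zero).clm_apply continuous_const)
    · exact hfs.mul_right
  rw [integral_sub hi1 hi2, sub_eq_zero] at key
  exact key

end aux

lemma my_lap_zero {N : ℕ} {w : EuclideanSpace ℝ (Fin N) → ℂ} {x : EuclideanSpace ℝ (Fin N)}
    (hx : x ∉ tsupport w) : laplacian w x = 0 := by
  unfold laplacian
  apply Finset.sum_eq_zero
  intro j _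
  have hsub : tsupport (fun y => fderiv ℝ w y (EuclideanSpace.single j 1)) ⊆ tsupport w := by
    apply closure_minimal _ (isClosed_tsupport w)
    intro y hy
    simp only [Function.mem_support] at hy
    have : fderiv ℝ w y ≠ 0 := fun h => hy (by rw [h]; rfl)
    exact support_fderiv_subset (𝕜 := ℝ) (Function.mem_support.2 this)
  have : x ∉ tsupport (fun y => fderiv ℝ w y (EuclideanSpace.single j 1)) :=
    fun h => hx (hsub h)
  rw [fderiv_of_notMem_tsupport (𝕜 := ℝ) this]
  rfl

lemma my_green {N : ℕ} {w v : EuclideanSpace ℝ (Fin N) → ℂ} (hw : ContDiff ℝ 2 w)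
    (hws : HasCompactSupport w) (hv : ContDiff ℝ 2 v) :
    ∫ x, laplacian w x * (starRingEnd ℂ) (v x)
      = ∫ x, w x * (starRingEnd ℂ) (laplacian v x) := by
  set c : ℂ →L[ℝ] ℂ := Complex.conjCLE.toContinuousLinearMap with hcdef
  have hcz : ∀ z, c z = (starRingEnd ℂ) z := fun z => rfl
  set u : EuclideanSpace ℝ (Fin N) → ℂ := fun x => c (v x) with hudef
  have hu : ContDiff ℝ 2 u := c.contDiff.comp hv
  have hD2u : ∀ (e : EuclideanSpace ℝ (Fin N)) x,
      fderiv ℝ (fun y => fderiv ℝ u y e) x e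
        = (starRingEnd ℂ) (fderiv ℝ (fun y => fderiv ℝ v y e) x e) := by
    intro e x
    have hDv : ContDiff ℝ 1 (fun y => fderiv ℝ v y e) :=
      (hv.fderiv_right (m := 1) le_rfl).clm_apply contDiff_const
    have h1 : (fun y => fderiv ℝ u y e) = fun y => c (fderiv ℝ v y e) :=
      funext fun y => my_fderiv_comp_clm c (hv.differentiable two_ne_zero y) e
    rw [h1, my_fderiv_comp_clm c (hDv.differentiable one_ne_zero x) e, hcz]
  have hint1 : ∀ j : Fin N, Integrable (fun x =>
      fderiv ℝ (fun y => fderiv ℝ w y (EuclideanSpace.single j 1)) x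
        (EuclideanSpace.single j 1) * u x) := by
    intro j
    set e := EuclideanSpace.single j (1 : ℝ)
    have hDw : ContDiff ℝ 1 (fun x => fderiv ℝ w x e) :=
      (hw.fderiv_right (m := 1) le_rfl).clm_apply contDiff_const
    apply Continuous.integrable_of_hasCompactSupport
    · exact ((hDw.continuous_fderiv one_ne_zero).clm_apply continuous_const).mul hu.continuous
    · exact ((hws.fderiv_apply (𝕜 := ℝ) e).fderiv_apply (𝕜 := ℝ) e).mul_right
  have hint2 : ∀ j : Fin N, Integrable (fun x =>
      w x * fderiv ℝ (fun y => fderiv ℝ u y (EuclideanSpace.single j 1)) x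
        (EuclideanSpace.single j 1)) := by
    intro j
    set e := EuclideanSpace.single j (1 : ℝ)
    have hDu : ContDiff ℝ 1 (fun x => fderiv ℝ u x e) :=
      (hu.fderiv_right (m := 1) le_rfl).clm_apply contDiff_const
    apply Continuous.integrable_of_hasCompactSupport
    · exact hw.continuous.mul ((hDu.continuous_fderiv one_ne_zero).clm_apply continuous_const)
    · exact hws.mul_right
  calc ∫ x, laplacian w x * (starRingEnd ℂ) (v x)
      = ∫ x, ∑ j : Fin N, fderiv ℝ (fun y => fderiv ℝ w y (EuclideanSpace.single j 1)) x
          (EuclideanSpace.single j 1) * u x := by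
        congr 1; funext x; rw [laplacian, Finset.sum_mul]; rfl
    _ = ∑ j : Fin N, ∫ x, fderiv ℝ (fun y => fderiv ℝ w y (EuclideanSpace.single j 1)) x
          (EuclideanSpace.single j 1) * u x :=
        integral_finset_sum _ (fun j _ => hint1 j)
    _ = ∑ j : Fin N, ∫ x, w x * fderiv ℝ (fun y => fderiv ℝ u y (EuclideanSpace.single j 1)) x
          (EuclideanSpace.single j 1) :=
        Finset.sum_congr rfl (fun j _ => my_green_dir volume hw hws hu _)
    _ = ∫ x, ∑ j : Fin N, w x * fderiv ℝ (fun y => fderiv ℝ u y (EuclideanSpace.single j 1)) x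
          (EuclideanSpace.single j 1) := (integral_finset_sum _ (fun j _ => hint2 j)).symm
    _ = ∫ x, w x * (starRingEnd ℂ) (laplacian v x) := by
        congr 1; funext x
        rw [← Finset.mul_sum]
        congr 1
        rw [laplacian, map_sum]
        exact Finset.sum_congr rfl (fun j _ => hD2u _ x)

lemma my_lap_continuous {N : ℕ} {w : EuclideanSpace ℝ (Fin N) → ℂ} (hw : ContDiff ℝ 2 w) :
    Continuous (laplacian w) := by
  unfold laplacian
  apply continuous_finset_sum
  intro j _
  have hDw : ContDiff ℝ 1 (fun x => fderiv ℝ w x (EuclideanSpace.single j 1)) :=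
    (hw.fderiv_right (m := 1) le_rfl).clm_apply contDiff_const
  exact (hDw.continuous_fderiv one_ne_zero).clm_apply continuous_const



/-- Estimate (3.9): if `Δv + k² ntilde² v = 0` on `Ω` and `Δw + k² n² w = v` on `Ω`, with
`|n| ≤ n*`, `|ntilde| ≤ n*`, `w` of class `C²` compactly supported in `Ω` and `v` of class
`C²`, then `∫_Ω |v|² ≤ 2 k² (n*)² (∫_Ω |v|²)^{1/2} (∫_Ω |w|²)^{1/2}`. -/
theorem transmission_cauchy_schwarz_estimate {N : ℕ} (hN : 1 ≤ N)
    (Ω : Set (EuclideanSpace ℝ (Fin N))) (hΩne : Ω.Nonempty)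
    (hΩopen : IsOpen Ω) (hΩbdd : Bornology.IsBounded Ω)
    (k : ℝ) (nstar : ℝ) (hnstar : 0 < nstar)
    (n ntilde : ℂ) (hn : ‖n‖ ≤ nstar) (hntilde : ‖ntilde‖ ≤ nstar)
    (w v : EuclideanSpace ℝ (Fin N) → ℂ)
    (hw : ContDiff ℝ 2 w) (hwsupp : HasCompactSupport w) (hwΩ : tsupport w ⊆ Ω)
    (hv : ContDiff ℝ 2 v)
    (hveq : ∀ x ∈ Ω, laplacian v x + (k : ℂ) ^ 2 * ntilde ^ 2 * v x = 0)
    (hweq : ∀ x ∈ Ω, laplacian w x + (k : ℂ) ^ 2 * n ^ 2 * w x = v x) :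
    (∫ x in Ω, ‖v x‖ ^ 2)
      ≤ 2 * k ^ 2 * nstar ^ 2 * Real.sqrt (∫ x in Ω, ‖v x‖ ^ 2)
        * Real.sqrt (∫ x in Ω, ‖w x‖ ^ 2) := by
  have hmeas : MeasurableSet Ω := hΩopen.measurableSet
  have hclos : IsCompact (closure Ω) := hΩbdd.isCompact_closure
  -- integrability of continuous functions on Ω
  have hIntOn : ∀ (f : EuclideanSpace ℝ (Fin N) → ℂ), Continuous f → IntegrableOn f Ω := by
    intro f hf
    exact ((hf.continuousOn).integrableOn_compact hclos).mono_set subset_closure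
  set conj : ℂ →+* ℂ := starRingEnd ℂ with hconj
  set A : ℝ := ∫ x in Ω, ‖v x‖ ^ 2 with hA
  set B : ℝ := ∫ x in Ω, ‖w x‖ ^ 2 with hB
  have hA0 : 0 ≤ A := by
    apply setIntegral_nonneg hmeas; intro x _; positivity
  have hB0 : 0 ≤ B := by
    apply setIntegral_nonneg hmeas; intro x _; positivity
  set I : ℂ := ∫ x in Ω, v x * conj (v x) with hI
  set J : ℂ := ∫ x in Ω, w x * conj (v x) with hJ
  -- I = A
  have hIA : I = (A : ℂ) := by
    have h1 : ∀ z : ℂ, z * conj z = ((‖z‖ ^ 2 : ℝ) : ℂ) := by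
      intro z
      rw [hconj, Complex.mul_conj, Complex.normSq_eq_norm_sq]
    calc I = ∫ x in Ω, ((‖v x‖ ^ 2 : ℝ) : ℂ) := by rw [hI]; congr 1; funext x; rw [h1]
      _ = (A : ℂ) := integral_ofReal
  -- transmission identity
  have hLwcont : Continuous (laplacian w) := my_lap_continuous hw
  have hLvcont : Continuous (laplacian v) := my_lap_continuous hv
  have hkey : I = ((k : ℂ) ^ 2 * n ^ 2 - (k : ℂ) ^ 2 * (conj ntilde) ^ 2) * J := by
    have e1 : I = ∫ x in Ω, (laplacian w x + (k : ℂ) ^ 2 * n ^ 2 * w x) * conj (v x) := by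
      rw [hI]
      apply setIntegral_congr_fun hmeas
      intro x hx
      show v x * conj (v x) = (laplacian w x + (k : ℂ) ^ 2 * n ^ 2 * w x) * conj (v x)
      rw [hweq x hx]
    have i1 : IntegrableOn (fun x => laplacian w x * conj (v x)) Ω :=
      hIntOn _ (hLwcont.mul (Complex.continuous_conj.comp hv.continuous))
    have i2 : IntegrableOn (fun x => (k : ℂ) ^ 2 * n ^ 2 * (w x * conj (v x))) Ω :=
      (hIntOn _ (hw.continuous.mul (Complex.continuous_conj.comp hv.continuous))).const_mul _
    have e2 : I = (∫ x in Ω, laplacian w x * conj (v x)) + (k : ℂ) ^ 2 * n ^ 2 * J := by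
      rw [e1]
      have : ∀ x, (laplacian w x + (k : ℂ) ^ 2 * n ^ 2 * w x) * conj (v x)
          = laplacian w x * conj (v x) + (k : ℂ) ^ 2 * n ^ 2 * (w x * conj (v x)) := by
        intro x; ring
      simp_rw [this]
      rw [integral_add i1 i2, integral_const_mul, hJ]
    -- extend first integral to all of space
    have e3 : (∫ x in Ω, laplacian w x * conj (v x))
        = ∫ x, laplacian w x * conj (v x) := by
      apply setIntegral_eq_integral_of_forall_compl_eq_zero
      intro x hx
      rw [my_lap_zero (fun h => hx (hwΩ h)), zero_mul]
    have e4 : (∫ x, laplacian w x * conj (v x)) = ∫ x, w x * conj (laplacian v x) :=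
      my_green hw hwsupp hv
    have e5 : (∫ x, w x * conj (laplacian v x)) = ∫ x in Ω, w x * conj (laplacian v x) := by
      symm
      apply setIntegral_eq_integral_of_forall_compl_eq_zero
      intro x hx
      rw [image_eq_zero_of_notMem_tsupport (fun h => hx (hwΩ h)), zero_mul]
    have e6 : (∫ x in Ω, w x * conj (laplacian v x))
        = -((k : ℂ) ^ 2 * (conj ntilde) ^ 2) * J := by
      have : ∀ x ∈ Ω, w x * conj (laplacian v x)
          = -((k : ℂ) ^ 2 * (conj ntilde) ^ 2) * (w x * conj (v x)) := by
        intro x hx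
        have hlv : laplacian v x = -((k : ℂ) ^ 2 * ntilde ^ 2 * v x) := by
          have := hveq x hx; linear_combination this
        rw [hlv]
        simp only [map_neg, map_mul, map_pow, hconj]
        rw [Complex.conj_ofReal]
        ring
      rw [setIntegral_congr_fun hmeas this, integral_const_mul, hJ]
    rw [e2, e3, e4, e5, e6]
    ring
  -- norm estimates
  have hnormI : A = ‖I‖ := by rw [hIA, Complex.norm_real, Real.norm_of_nonneg hA0]
  have hcoef : ‖(k : ℂ) ^ 2 * n ^ 2 - (k : ℂ) ^ 2 * (conj ntilde) ^ 2‖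
      ≤ 2 * k ^ 2 * nstar ^ 2 := by
    have h1 : ‖(k : ℂ) ^ 2 * n ^ 2‖ ≤ k ^ 2 * nstar ^ 2 := by
      rw [norm_mul, norm_pow, norm_pow, Complex.norm_real, Real.norm_eq_abs, sq_abs]
      gcongr
    have h2 : ‖(k : ℂ) ^ 2 * (conj ntilde) ^ 2‖ ≤ k ^ 2 * nstar ^ 2 := by
      rw [norm_mul, norm_pow, norm_pow, Complex.norm_real, Real.norm_eq_abs, sq_abs, hconj,
        RCLike.norm_conj]
      gcongr
    calc ‖(k : ℂ) ^ 2 * n ^ 2 - (k : ℂ) ^ 2 * (conj ntilde) ^ 2‖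
        ≤ ‖(k : ℂ) ^ 2 * n ^ 2‖ + ‖(k : ℂ) ^ 2 * (conj ntilde) ^ 2‖ := norm_sub_le _ _
      _ ≤ k ^ 2 * nstar ^ 2 + k ^ 2 * nstar ^ 2 := add_le_add h1 h2
      _ = 2 * k ^ 2 * nstar ^ 2 := by ring
  -- Cauchy-Schwarz for J
  haveI : IsFiniteMeasure (volume.restrict Ω) := by
    constructor
    rw [Measure.restrict_apply_univ]
    exact hΩbdd.measure_lt_top
  have hmemv : MemLp (fun x => ‖v x‖) (ENNReal.ofReal 2) (volume.restrict Ω) := by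
    obtain ⟨C, hC⟩ := hclos.exists_bound_of_continuousOn hv.continuous.norm.continuousOn
    apply MemLp.of_bound (hv.continuous.norm.aestronglyMeasurable) C
    filter_upwards [ae_restrict_mem hmeas] with x hx
    exact hC x (subset_closure hx)
  have hmemw : MemLp (fun x => ‖w x‖) (ENNReal.ofReal 2) (volume.restrict Ω) := by
    obtain ⟨C, hC⟩ := hclos.exists_bound_of_continuousOn hw.continuous.norm.continuousOn
    apply MemLp.of_bound (hw.continuous.norm.aestronglyMeasurable) C
    filter_upwards [ae_restrict_mem hmeas] with x hx
    exact hC x (subset_closure hx)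
  have hCS : (∫ x in Ω, ‖v x‖ * ‖w x‖) ≤ Real.sqrt A * Real.sqrt B := by
    have hpq : Real.HolderConjugate 2 2 := by constructor <;> norm_num
    have := integral_mul_le_Lp_mul_Lq_of_nonneg hpq
      (Filter.Eventually.of_forall fun x => norm_nonneg (v x))
      (Filter.Eventually.of_forall fun x => norm_nonneg (w x)) hmemv hmemw
    have hv2 : (∫ x in Ω, ‖v x‖ ^ (2 : ℝ)) = A := by
      rw [hA]; congr 1; funext x
      rw [show (2 : ℝ) = ((2 : ℕ) : ℝ) by norm_num, Real.rpow_natCast]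
    have hw2 : (∫ x in Ω, ‖w x‖ ^ (2 : ℝ)) = B := by
      rw [hB]; congr 1; funext x
      rw [show (2 : ℝ) = ((2 : ℕ) : ℝ) by norm_num, Real.rpow_natCast]
    rw [hv2, hw2] at this
    calc (∫ x in Ω, ‖v x‖ * ‖w x‖) ≤ A ^ (1 / 2 : ℝ) * B ^ (1 / 2 : ℝ) := this
      _ = Real.sqrt A * Real.sqrt B := by
          rw [Real.sqrt_eq_rpow, Real.sqrt_eq_rpow]
  have hJbound : ‖J‖ ≤ Real.sqrt A * Real.sqrt B := by
    calc ‖J‖ ≤ ∫ x in Ω, ‖w x * conj (v x)‖ := norm_integral_le_integral_norm _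
      _ = ∫ x in Ω, ‖v x‖ * ‖w x‖ := by
          congr 1; funext x
          rw [norm_mul, hconj, RCLike.norm_conj, mul_comm]
      _ ≤ Real.sqrt A * Real.sqrt B := hCS
  -- finish
  calc A = ‖I‖ := hnormI
    _ = ‖(k : ℂ) ^ 2 * n ^ 2 - (k : ℂ) ^ 2 * (conj ntilde) ^ 2‖ * ‖J‖ := by
        rw [hkey, norm_mul]
    _ ≤ (2 * k ^ 2 * nstar ^ 2) * (Real.sqrt A * Real.sqrt B) := by
        apply mul_le_mul hcoef hJbound (norm_nonneg _) (by positivity)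
    _ = 2 * k ^ 2 * nstar ^ 2 * Real.sqrt A * Real.sqrt B := by ring
end
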